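/- Let n ≥ 2 be even. Then the geometric realization of the Vietoris–Rips complex VR(T_{n,n}; n−1) is homeomorphic to the sphere S^{n²/2 − 1}. (Note diam(T_{n,n}) = n when n is even, so this is the scale one below the diameter.) -/

import Mathlib

/-- `σ` is a simplex of the Vietoris–Rips complex `VR(V; k)` of the metric space `V`
with (integer-valued) distance `d`: a finite nonempty subset of diameter at most `k`. -/
def IsVRSimplex {V : Type*} (d : V → V → ℤ) (k : ℤ) (σ : Finset V) : Prop :=
  σ.Nonempty ∧ ∀ x ∈ σ, ∀ y ∈ σ, d x y ≤ k

/-- The circular metric on `ZMod n` (shortest-path metric of the cycle graph `C_n`). -/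
def cZdist (n : ℕ) (x y : ZMod n) : ℤ := min ((x - y).val : ℤ) ((y - x).val : ℤ)

/-- The ℓ¹ (quotient) metric on the `n × n` torus grid `T_{n,n} = ℤ²/G_n`,
realized on `ZMod n × ZMod n`. -/
def tdist (n : ℕ) (x y : ZMod n × ZMod n) : ℤ := cZdist n x.1 y.1 + cZdist n x.2 y.2

/-- The geometric realization of the abstract simplicial complex whose simplices are
(the nonempty subsets of) the members of `S`: the set of finitely supported probability
vectors on the vertex set whose support lies in some member of `S`, topologized as a
subspace of `V → ℝ`. -/
def Realization {V : Type*} (S : Set (Finset V)) : Set (V → ℝ) :=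
  {f | ∃ σ ∈ S, (∀ v, v ∉ σ → f v = 0) ∧ (∀ v, 0 ≤ f v) ∧ σ.sum f = 1}


theorem half_self_neg {n : ℕ} (hn : n = 2 * (n/2)) :
    ((n/2 : ℕ) : ZMod n) = -((n/2 : ℕ) : ZMod n) := by
  have h2 : ((n/2 : ℕ) : ZMod n) + ((n/2 : ℕ) : ZMod n) = 0 := by
    have hs : n/2 + n/2 = n := by omega
    calc ((n/2 : ℕ) : ZMod n) + ((n/2 : ℕ) : ZMod n) = (((n/2 + n/2 : ℕ)) : ZMod n) := by push_cast; ring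
      _ = ((n : ℕ) : ZMod n) := by rw [hs]
      _ = 0 := ZMod.natCast_self n
  exact (neg_eq_of_add_eq_zero_left h2).symm

theorem czd_basic {n : ℕ} (hn : n = 2 * (n/2)) (h1 : 1 ≤ n/2) (u v : ZMod n) :
    v = u + ((n/2 : ℕ) : ZMod n) → cZdist n u v = (n/2 : ℕ) := by
  intro hv
  have hNZ : NeZero n := ⟨by omega⟩
  have hval : (((n/2 : ℕ)) : ZMod n).val = n/2 := ZMod.val_cast_of_lt (by omega)
  have hsub : u - v = ((n/2 : ℕ) : ZMod n) := by
    have h3 : u - v = -((n/2 : ℕ) : ZMod n) := by rw [hv]; ring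
    rw [h3, ← half_self_neg hn]
  have hsub2 : v - u = ((n/2 : ℕ) : ZMod n) := by rw [hv]; ring
  simp [cZdist, hsub, hsub2, hval]

theorem czd_lt {n : ℕ} (hn : n = 2 * (n/2)) (h1 : 1 ≤ n/2) (u v : ZMod n) :
    v ≠ u + ((n/2 : ℕ) : ZMod n) → cZdist n u v ≤ (n/2 : ℕ) - 1 := by
  intro hv
  have hNZ : NeZero n := ⟨by omega⟩
  have hval : (((n/2 : ℕ)) : ZMod n).val = n/2 := ZMod.val_cast_of_lt (by omega)
  by_cases ha : v - u = 0
  · have : v = u := by rwa [sub_eq_zero] at ha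
    subst this
    have : cZdist n v v = 0 := by simp [cZdist]
    rw [this]; push_cast; omega
  · have hbval : v - u ≠ ((n/2 : ℕ) : ZMod n) := by
      intro h; apply hv; rw [← h]; ring
    have hvne : (v - u).val ≠ n/2 := by
      intro h
      apply hbval
      have h2 := ZMod.natCast_rightInverse (n := n) (v - u)
      rw [h] at h2; exact h2.symm
    have hnegval : (u - v).val = n - (v - u).val := by
      have hneg : (u - v) = -(v - u) := by ring
      rw [hneg, ZMod.neg_val]; simp [ha]
    have hpos : (v - u).val ≠ 0 := by rwa [Ne, ZMod.val_eq_zero]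
    have hlt : (v - u).val < n := ZMod.val_lt _
    simp only [cZdist, hnegval]
    push_cast [Nat.cast_sub hlt.le]
    omega

theorem czd_le {n : ℕ} (hn : n = 2 * (n/2)) (h1 : 1 ≤ n/2) (u v : ZMod n) :
    cZdist n u v ≤ (n/2 : ℕ) := by
  by_cases hv : v = u + ((n/2 : ℕ) : ZMod n)
  · rw [czd_basic hn h1 u v hv]
  · have := czd_lt hn h1 u v hv; omega

def anti (n : ℕ) (v : ZMod n × ZMod n) : ZMod n × ZMod n :=
  (v.1 + ((n/2 : ℕ) : ZMod n), v.2 + ((n/2 : ℕ) : ZMod n))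

theorem tdist_le_of_ne {n : ℕ} (hn : n = 2 * (n/2)) (h1 : 1 ≤ n/2)
    (u v : ZMod n × ZMod n) (hne : v ≠ anti n u) : tdist n u v ≤ (n : ℤ) - 1 := by
  by_cases hv1 : v.1 = u.1 + ((n/2 : ℕ) : ZMod n)
  · have hv2 : v.2 ≠ u.2 + ((n/2 : ℕ) : ZMod n) := by
      intro hv2; exact hne (Prod.ext hv1 hv2)
    have b1 := czd_le hn h1 u.1 v.1
    have b2 := czd_lt hn h1 u.2 v.2 hv2
    unfold tdist; omega
  · have b1 := czd_lt hn h1 u.1 v.1 hv1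
    have b2 := czd_le hn h1 u.2 v.2
    unfold tdist; omega

theorem tdist_anti {n : ℕ} (hn : n = 2 * (n/2)) (h1 : 1 ≤ n/2) (u : ZMod n × ZMod n) :
    tdist n u (anti n u) = (n : ℤ) := by
  have b1 := czd_basic hn h1 u.1 (anti n u).1 rfl
  have b2 := czd_basic hn h1 u.2 (anti n u).2 rfl
  unfold tdist; omega


theorem simplex_iff {n : ℕ} (hn : n = 2 * (n/2)) (h1 : 1 ≤ n/2)
    (σ : Finset (ZMod n × ZMod n)) :
    IsVRSimplex (tdist n) ((n : ℤ) - 1) σ ↔ σ.Nonempty ∧ ∀ x ∈ σ, anti n x ∉ σ := by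
  constructor
  · rintro ⟨hne, hd⟩
    refine ⟨hne, fun x hx hax => ?_⟩
    have := hd x hx (anti n x) hax
    rw [tdist_anti hn h1] at this; omega
  · rintro ⟨hne, ha⟩
    refine ⟨hne, fun x hx y hy => ?_⟩
    refine tdist_le_of_ne hn h1 x y fun hee => ?_
    exact ha x hx (hee ▸ hy)

def wmap (n : ℕ) (k : ZMod n × ZMod (n/2)) : ZMod n × ZMod n := (k.1, (k.2.val : ZMod n))

def idx (n : ℕ) (v : ZMod n × ZMod n) : ZMod n × ZMod (n/2) :=
  if v.2.val < n/2 then (v.1, (v.2.val : ZMod (n/2)))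
  else (v.1 - ((n/2 : ℕ) : ZMod n), ((v.2.val - n/2 : ℕ) : ZMod (n/2)))

section IndexLemmas
set_option linter.unusedSectionVars false
variable {n : ℕ} [NeZero n] [NeZero (n/2)]

theorem w_val (hn : n = 2 * (n/2)) (k : ZMod n × ZMod (n/2)) :
    (wmap n k).2.val = k.2.val := by
  have := ZMod.val_lt k.2
  exact ZMod.val_cast_of_lt (by omega)

theorem aw_snd (k : ZMod n × ZMod (n/2)) :
    (anti n (wmap n k)).2 = ((k.2.val + n/2 : ℕ) : ZMod n) := by
  show ((k.2.val : ℕ) : ZMod n) + _ = _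
  push_cast; ring

theorem aw_val (hn : n = 2 * (n/2)) (k : ZMod n × ZMod (n/2)) :
    (anti n (wmap n k)).2.val = k.2.val + n/2 := by
  rw [aw_snd]
  have := ZMod.val_lt k.2
  exact ZMod.val_cast_of_lt (by omega)

theorem idx_w (hn : n = 2 * (n/2)) (k : ZMod n × ZMod (n/2)) : idx n (wmap n k) = k := by
  have hlt : (wmap n k).2.val < n/2 := by rw [w_val hn]; exact ZMod.val_lt k.2
  rw [idx, if_pos hlt, w_val hn]
  exact Prod.ext rfl (ZMod.natCast_rightInverse k.2)

theorem idx_aw (hn : n = 2 * (n/2)) (k : ZMod n × ZMod (n/2)) :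
    idx n (anti n (wmap n k)) = k := by
  have hge : ¬ (anti n (wmap n k)).2.val < n/2 := by rw [aw_val hn]; omega
  rw [idx, if_neg hge, aw_val hn]
  refine Prod.ext ?_ ?_
  · show (wmap n k).1 + _ - _ = k.1; show k.1 + _ - _ = k.1; ring
  · show (((k.2.val + n/2 - n/2 : ℕ)) : ZMod (n/2)) = k.2
    rw [Nat.add_sub_cancel]; exact ZMod.natCast_rightInverse k.2

theorem sec_pos (v : ZMod n × ZMod n) (hlt : v.2.val < n/2) : wmap n (idx n v) = v := by
  rw [idx, if_pos hlt]
  refine Prod.ext rfl ?_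
  show ((((v.2.val : ℕ) : ZMod (n/2)).val : ℕ) : ZMod n) = v.2
  rw [ZMod.val_cast_of_lt hlt]
  exact ZMod.natCast_rightInverse v.2

theorem sec_neg (hn : n = 2 * (n/2)) (v : ZMod n × ZMod n) (hge : ¬ v.2.val < n/2) :
    anti n (wmap n (idx n v)) = v := by
  rw [idx, if_neg hge]
  have hvlt := ZMod.val_lt v.2
  refine Prod.ext ?_ ?_
  · show v.1 - _ + _ = v.1; ring
  · show ((((v.2.val - n/2 : ℕ) : ZMod (n/2)).val : ℕ) : ZMod n) + ((n/2 : ℕ) : ZMod n) = v.2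
    rw [ZMod.val_cast_of_lt (by omega)]
    rw [show ((v.2.val - n/2 : ℕ) : ZMod n) + ((n/2 : ℕ) : ZMod n)
        = ((v.2.val - n/2 + n/2 : ℕ) : ZMod n) by push_cast; ring]
    rw [Nat.sub_add_cancel (by omega)]
    exact ZMod.natCast_rightInverse v.2

theorem anti_ne (hn : n = 2 * (n/2)) (h1 : 1 ≤ n/2) (v : ZMod n × ZMod n) :
    anti n v ≠ v := by
  intro h
  have h2 : v.2 + ((n/2 : ℕ) : ZMod n) = v.2 := congrArg Prod.snd h
  have h3 : ((n/2 : ℕ) : ZMod n) = 0 := by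
    have := add_eq_left.mp h2
    simpa using this
  have h4 : (((n/2 : ℕ)) : ZMod n).val = n/2 := ZMod.val_cast_of_lt (by omega)
  rw [h3] at h4; simp at h4; omega

theorem anti_anti (hn : n = 2 * (n/2)) (v : ZMod n × ZMod n) : anti n (anti n v) = v := by
  have hz : ((n/2 : ℕ) : ZMod n) + ((n/2 : ℕ) : ZMod n) = 0 := by
    rw [show ((n/2 : ℕ) : ZMod n) + ((n/2 : ℕ) : ZMod n) = ((n/2 + n/2 : ℕ) : ZMod n) by push_cast; ring,
      show n/2 + n/2 = n by omega, ZMod.natCast_self]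
  show (v.1 + _ + _, v.2 + _ + _) = v
  rw [add_assoc, add_assoc, hz, add_zero, add_zero]

theorem anti_val_pos (hn : n = 2 * (n/2)) (v : ZMod n × ZMod n) (hlt : v.2.val < n/2) :
    (anti n v).2.val = v.2.val + n/2 := by
  show (v.2 + ((n/2 : ℕ) : ZMod n)).val = _
  rw [show v.2 + ((n/2 : ℕ) : ZMod n) = ((v.2.val + n/2 : ℕ) : ZMod n) by
    push_cast; rw [ZMod.natCast_rightInverse v.2]]
  exact ZMod.val_cast_of_lt (by omega)

theorem anti_val_neg (hn : n = 2 * (n/2)) (v : ZMod n × ZMod n) (hge : ¬ v.2.val < n/2) :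
    (anti n v).2.val = v.2.val - n/2 := by
  have hvlt := ZMod.val_lt v.2
  show (v.2 + ((n/2 : ℕ) : ZMod n)).val = _
  rw [show v.2 + ((n/2 : ℕ) : ZMod n) = ((v.2.val + n/2 : ℕ) : ZMod n) by
    push_cast; rw [ZMod.natCast_rightInverse v.2]]
  rw [ZMod.val_natCast, Nat.mod_eq_sub_mod (by omega), Nat.mod_eq_of_lt (by omega)]
  omega

theorem idx_anti (hn : n = 2 * (n/2)) (h1 : 1 ≤ n/2) (v : ZMod n × ZMod n) :
    idx n (anti n v) = idx n v := by
  by_cases hlt : v.2.val < n/2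
  · have hav := anti_val_pos hn v hlt
    rw [idx, if_neg (by omega), idx, if_pos hlt]
    refine Prod.ext ?_ ?_
    · show v.1 + _ - _ = v.1; ring
    · rw [hav]; norm_num
  · have hav := anti_val_neg hn v hlt
    have hvlt := ZMod.val_lt v.2
    rw [idx, if_pos (by omega), idx, if_neg hlt]
    refine Prod.ext ?_ ?_
    · show (anti n v).1 = _
      show v.1 + ((n/2:ℕ) : ZMod n) = v.1 - ((n/2:ℕ) : ZMod n)
      rw [sub_eq_add_neg, ← half_self_neg hn]
    · rw [hav]

def pairEquiv (hn : n = 2 * (n/2)) (h1 : 1 ≤ n/2) :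
    (ZMod n × ZMod (n/2)) × Bool ≃ (ZMod n × ZMod n) where
  toFun kb := if kb.2 then wmap n kb.1 else anti n (wmap n kb.1)
  invFun v := (idx n v, decide (v.2.val < n/2))
  left_inv := by
    rintro ⟨k, b⟩
    have hw := w_val hn k
    have haw := aw_val hn k
    have hkv := ZMod.val_lt k.2
    cases b
    · simp only [Bool.false_eq_true, if_false, idx_aw hn, Prod.mk.injEq, true_and]
      rw [decide_eq_false (by omega)]
    · simp only [if_true, idx_w hn, Prod.mk.injEq, true_and]
      rw [decide_eq_true (by omega)]
  right_inv := by
    intro v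
    by_cases hlt : v.2.val < n/2
    · simp only [decide_eq_true hlt, if_true]; exact sec_pos v hlt
    · simp only [decide_eq_false hlt, Bool.false_eq_true, if_false]; exact sec_neg hn v hlt

theorem sum_pairs (hn : n = 2 * (n/2)) (h1 : 1 ≤ n/2) (g : (ZMod n × ZMod n) → ℝ) :
    ∑ v, g v = ∑ k : ZMod n × ZMod (n/2), (g (wmap n k) + g (anti n (wmap n k))) := by
  rw [← Equiv.sum_comp (pairEquiv hn h1) g, Fintype.sum_prod_type]
  refine Finset.sum_congr rfl fun k _ => ?_
  rw [Fintype.sum_bool]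
  simp [pairEquiv, add_comm]

end IndexLemmas


def sgn (n : ℕ) (v : ZMod n × ZMod n) : ℝ := if v.2.val < n/2 then 1 else -1

def phiMap (n : ℕ) (f : (ZMod n × ZMod n) → ℝ) (k : ZMod n × ZMod (n/2)) : ℝ :=
  f (wmap n k) - f (anti n (wmap n k))

def psiMap (n : ℕ) (x : (ZMod n × ZMod (n/2)) → ℝ) (v : ZMod n × ZMod n) : ℝ :=
  max (sgn n v * x (idx n v)) 0

theorem max_helper1 (a b : ℝ) (ha : 0 ≤ a) (hb : 0 ≤ b) (h : a = 0 ∨ b = 0) :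
    max (a - b) 0 = a := by
  rcases h with h | h
  · subst h; rw [zero_sub]; exact max_eq_right (by linarith)
  · subst h; rw [sub_zero]; exact max_eq_left ha

theorem max_helper2 (a : ℝ) : max a 0 - max (-a) 0 = a := by
  rcases le_total a 0 with h | h
  · rw [max_eq_right h, max_eq_left (by linarith)]; ring
  · rw [max_eq_left h, max_eq_right (by linarith)]; ring

theorem max_helper3 (a : ℝ) : max a 0 + max (-a) 0 = |a| := by
  rcases le_total a 0 with h | h
  · rw [max_eq_right h, max_eq_left (by linarith), abs_of_nonpos h]; ring
  · rw [max_eq_left h, max_eq_right (by linarith), abs_of_nonneg h]; ring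

section Maps
set_option linter.unusedSectionVars false
variable {n : ℕ} [NeZero n] [NeZero (n/2)]

theorem sgn_w (hn : n = 2 * (n/2)) (k : ZMod n × ZMod (n/2)) : sgn n (wmap n k) = 1 := by
  have := w_val hn k; have := ZMod.val_lt k.2
  rw [sgn, if_pos (by omega)]

theorem sgn_aw (hn : n = 2 * (n/2)) (k : ZMod n × ZMod (n/2)) :
    sgn n (anti n (wmap n k)) = -1 := by
  have := aw_val hn k
  rw [sgn, if_neg (by omega)]

theorem sgn_anti (hn : n = 2 * (n/2)) (v : ZMod n × ZMod n) :
    sgn n (anti n v) = - sgn n v := by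
  have hvlt := ZMod.val_lt v.2
  by_cases hlt : v.2.val < n/2
  · have := anti_val_pos hn v hlt
    rw [sgn, sgn, if_pos hlt, if_neg (by omega)]
  · have := anti_val_neg hn v hlt
    rw [sgn, sgn, if_neg hlt, if_pos (by omega)]
    norm_num

theorem psi_w (hn : n = 2 * (n/2)) (x : (ZMod n × ZMod (n/2)) → ℝ) (k : ZMod n × ZMod (n/2)) :
    psiMap n x (wmap n k) = max (x k) 0 := by
  rw [psiMap, idx_w hn, sgn_w hn, one_mul]

theorem psi_aw (hn : n = 2 * (n/2)) (x : (ZMod n × ZMod (n/2)) → ℝ) (k : ZMod n × ZMod (n/2)) :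
    psiMap n x (anti n (wmap n k)) = max (-(x k)) 0 := by
  rw [psiMap, idx_aw hn, sgn_aw hn, neg_one_mul]

theorem mem_real_iff (hn : n = 2 * (n/2)) (h1 : 1 ≤ n/2) (f : (ZMod n × ZMod n) → ℝ) :
    f ∈ Realization {σ : Finset (ZMod n × ZMod n) | IsVRSimplex (tdist n) ((n : ℤ) - 1) σ} ↔
      (∀ v, 0 ≤ f v) ∧ (∀ v, f v = 0 ∨ f (anti n v) = 0) ∧ ∑ v, f v = 1 := by
  constructor
  · rintro ⟨σ, hσ, hzero, hpos, hsum⟩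
    rw [Set.mem_setOf_eq, simplex_iff hn h1] at hσ
    refine ⟨hpos, fun v => ?_, ?_⟩
    · by_contra hcon
      push_neg at hcon
      have hv : v ∈ σ := by by_contra h; exact hcon.1 (hzero v h)
      have hav : anti n v ∈ σ := by by_contra h; exact hcon.2 (hzero _ h)
      exact hσ.2 v hv hav
    · rw [← hsum]
      exact (Finset.sum_subset (Finset.subset_univ σ) (fun x _ hx => hzero x hx)).symm
  · rintro ⟨hpos, horth, hsum⟩
    refine ⟨Finset.univ.filter (fun v => f v ≠ 0), ?_, fun v hv => ?_, hpos, ?_⟩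
    · rw [Set.mem_setOf_eq, simplex_iff hn h1]
      constructor
      · rw [Finset.nonempty_iff_ne_empty]
        intro hemp
        have : Finset.sum (Finset.univ.filter (fun v => f v ≠ 0)) f = 1 := by
          rw [Finset.sum_filter_ne_zero, hsum]
        rw [hemp, Finset.sum_empty] at this; norm_num at this
      · intro v hv hav
        simp only [Finset.mem_filter] at hv hav
        rcases horth v with h | h
        · exact hv.2 h
        · exact hav.2 h
    · simp only [Finset.mem_filter, Finset.mem_univ, true_and, not_not] at hv
      exact hv
    · rw [Finset.sum_filter_ne_zero, hsum]

theorem phi_sum (hn : n = 2 * (n/2)) (h1 : 1 ≤ n/2) (f : (ZMod n × ZMod n) → ℝ)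
    (hpos : ∀ v, 0 ≤ f v) (horth : ∀ v, f v = 0 ∨ f (anti n v) = 0) (hsum : ∑ v, f v = 1) :
    ∑ k, |phiMap n f k| = 1 := by
  have : ∀ k, |phiMap n f k| = f (wmap n k) + f (anti n (wmap n k)) := by
    intro k
    rcases horth (wmap n k) with h | h
    · rw [phiMap, h, zero_sub, abs_neg, abs_of_nonneg (hpos _), zero_add]
    · rw [phiMap, h, sub_zero, abs_of_nonneg (hpos _), add_zero]
  rw [Finset.sum_congr rfl (fun k _ => this k), ← sum_pairs hn h1, hsum]

theorem psi_phi (hn : n = 2 * (n/2)) (h1 : 1 ≤ n/2) (f : (ZMod n × ZMod n) → ℝ)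
    (hpos : ∀ v, 0 ≤ f v) (horth : ∀ v, f v = 0 ∨ f (anti n v) = 0) :
    psiMap n (phiMap n f) = f := by
  funext v
  by_cases hlt : v.2.val < n/2
  · have hsec := sec_pos (n := n) v hlt
    rw [psiMap, sgn, if_pos hlt, one_mul, phiMap, hsec]
    exact max_helper1 _ _ (hpos _) (hpos _) (horth v)
  · have hsec := sec_neg hn v hlt
    rw [psiMap, sgn, if_neg hlt, neg_one_mul, phiMap, hsec]
    have : wmap n (idx n v) = anti n v := by
      rw [← anti_anti hn (wmap n (idx n v)), hsec]
    rw [this, neg_sub]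
    exact max_helper1 _ _ (hpos _) (hpos _) (horth v)

theorem phi_psi (hn : n = 2 * (n/2)) (h1 : 1 ≤ n/2) (x : (ZMod n × ZMod (n/2)) → ℝ) :
    phiMap n (psiMap n x) = x := by
  funext k
  rw [phiMap, psi_w hn, psi_aw hn]
  exact max_helper2 _

theorem psi_pos (x : (ZMod n × ZMod (n/2)) → ℝ) (v : ZMod n × ZMod n) : 0 ≤ psiMap n x v :=
  le_max_right _ _

theorem psi_orth (hn : n = 2 * (n/2)) (h1 : 1 ≤ n/2) (x : (ZMod n × ZMod (n/2)) → ℝ)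
    (v : ZMod n × ZMod n) : psiMap n x v = 0 ∨ psiMap n x (anti n v) = 0 := by
  rcases le_total (sgn n v * x (idx n v)) 0 with h | h
  · exact Or.inl (max_eq_right h)
  · refine Or.inr ?_
    rw [psiMap, idx_anti hn h1, sgn_anti hn, neg_mul]
    exact max_eq_right (by linarith)

theorem psi_sum (hn : n = 2 * (n/2)) (h1 : 1 ≤ n/2) (x : (ZMod n × ZMod (n/2)) → ℝ)
    (hx : ∑ k, |x k| = 1) : ∑ v, psiMap n x v = 1 := by
  rw [sum_pairs hn h1, ← hx]
  refine Finset.sum_congr rfl fun k _ => ?_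
  rw [psi_w hn, psi_aw hn, max_helper3]

def homeo1 (hn : n = 2 * (n/2)) (h1 : 1 ≤ n/2) :
    ↥(Realization {σ : Finset (ZMod n × ZMod n) | IsVRSimplex (tdist n) ((n : ℤ) - 1) σ}) ≃ₜ
      {x : (ZMod n × ZMod (n/2)) → ℝ // ∑ k, |x k| = 1} where
  toFun f := ⟨phiMap n f.1, by
    obtain ⟨hpos, horth, hsum⟩ := (mem_real_iff hn h1 f.1).mp f.2
    exact phi_sum hn h1 f.1 hpos horth hsum⟩
  invFun x := ⟨psiMap n x.1, by
    rw [mem_real_iff hn h1]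
    exact ⟨psi_pos x.1, psi_orth hn h1 x.1, psi_sum hn h1 x.1 x.2⟩⟩
  left_inv := by
    rintro ⟨f, hf⟩
    obtain ⟨hpos, horth, hsum⟩ := (mem_real_iff hn h1 f).mp hf
    exact Subtype.ext (psi_phi hn h1 f hpos horth)
  right_inv := by
    rintro ⟨x, hx⟩
    exact Subtype.ext (phi_psi hn h1 x)
  continuous_toFun := by
    apply Continuous.subtype_mk
    exact continuous_pi fun k =>
      ((continuous_apply (wmap n k)).comp continuous_subtype_val).sub
        ((continuous_apply (anti n (wmap n k))).comp continuous_subtype_val)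
  continuous_invFun := by
    apply Continuous.subtype_mk
    exact continuous_pi fun v =>
      ((continuous_const.mul ((continuous_apply (idx n v)).comp continuous_subtype_val)).max
        continuous_const)

end Maps

section Reindex
variable {I : Type*} [Fintype I] {N : ℕ}

def reindexHomeo (e : I ≃ Fin N) : (I → ℝ) ≃ₜ (Fin N → ℝ) where
  toFun x j := x (e.symm j)
  invFun y i := y (e i)
  left_inv x := funext fun i => by simp
  right_inv y := funext fun j => by simp
  continuous_toFun := continuous_pi fun j => continuous_apply _
  continuous_invFun := continuous_pi fun i => continuous_apply _

noncomputable def homeo2 (e : I ≃ Fin N) :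
    {x : I → ℝ // ∑ i, |x i| = 1} ≃ₜ {y : EuclideanSpace ℝ (Fin N) // ∑ j, |y j| = 1} :=
  ((reindexHomeo e).trans (EuclideanSpace.equiv (Fin N) ℝ).symm.toHomeomorph).subtype
    (fun x => by
      have hap : ∀ j, (((reindexHomeo e).trans
          (EuclideanSpace.equiv (Fin N) ℝ).symm.toHomeomorph) x) j = x (e.symm j) :=
        fun j => rfl
      have hsum : ∑ j, |(((reindexHomeo e).trans
          (EuclideanSpace.equiv (Fin N) ℝ).symm.toHomeomorph) x) j| = ∑ i, |x i| := by
        rw [Finset.sum_congr rfl fun j _ => by rw [hap j]]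
        exact Equiv.sum_comp e.symm (fun i => |x i|)
      rw [hsum])

end Reindex

section Radial
variable {N : ℕ}

theorem sum_abs_smul (c : ℝ) (y : EuclideanSpace ℝ (Fin N)) :
    ∑ j, |(c • y) j| = |c| * ∑ j, |y j| := by
  rw [Finset.mul_sum]
  exact Finset.sum_congr rfl fun j _ => by rw [PiLp.smul_apply, smul_eq_mul, abs_mul]

theorem norm_ne_zero_of_sum (y : EuclideanSpace ℝ (Fin N)) (hy : ∑ j, |y j| = 1) :
    ‖y‖ ≠ 0 := by
  intro h
  rw [norm_eq_zero] at h
  subst h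
  simp only [PiLp.zero_apply, abs_zero, Finset.sum_const_zero] at hy
  norm_num at hy

theorem sum_abs_pos_of_norm_one (y : EuclideanSpace ℝ (Fin N)) (hy : ‖y‖ = 1) :
    0 < ∑ j, |y j| := by
  have h0 : (0 : ℝ) ≤ ∑ j, |y j| := Finset.sum_nonneg fun j _ => abs_nonneg _
  rcases h0.lt_or_eq with h | h
  · exact h
  · exfalso
    have hall := (Finset.sum_eq_zero_iff_of_nonneg fun j _ => abs_nonneg (y j)).mp h.symm
    have : y = 0 := by
      ext j
      exact abs_eq_zero.mp (hall j (Finset.mem_univ j))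
    rw [this, norm_zero] at hy
    norm_num at hy

noncomputable def homeo3 :
    {y : EuclideanSpace ℝ (Fin N) // ∑ j, |y j| = 1} ≃ₜ
      ↥(Metric.sphere (0 : EuclideanSpace ℝ (Fin N)) 1) where
  toFun y := ⟨‖y.1‖⁻¹ • y.1, by
    rw [mem_sphere_zero_iff_norm, norm_smul, norm_inv, norm_norm,
      inv_mul_cancel₀ (norm_ne_zero_of_sum y.1 y.2)]⟩
  invFun y := ⟨(∑ j, |y.1 j|)⁻¹ • y.1, by
    have hpos := sum_abs_pos_of_norm_one y.1 (mem_sphere_zero_iff_norm.mp y.2)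
    rw [sum_abs_smul, abs_inv, abs_of_pos hpos, inv_mul_cancel₀ hpos.ne']⟩
  left_inv := by
    rintro ⟨y, hy⟩
    have hne := norm_ne_zero_of_sum y hy
    refine Subtype.ext ?_
    show (∑ j, |(‖y‖⁻¹ • y) j|)⁻¹ • ‖y‖⁻¹ • y = y
    rw [sum_abs_smul, hy, mul_one, abs_inv, abs_norm, inv_inv, smul_smul,
      mul_inv_cancel₀ hne, one_smul]
  right_inv := by
    rintro ⟨y, hy⟩
    rw [mem_sphere_zero_iff_norm] at hy
    have hpos := sum_abs_pos_of_norm_one y hy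
    refine Subtype.ext ?_
    show ‖(∑ j, |y j|)⁻¹ • y‖⁻¹ • (∑ j, |y j|)⁻¹ • y = y
    rw [norm_smul, hy, mul_one, norm_inv, Real.norm_eq_abs, abs_of_pos hpos, inv_inv,
      smul_smul, mul_inv_cancel₀ hpos.ne', one_smul]
  continuous_toFun := by
    apply Continuous.subtype_mk
    exact ((continuous_subtype_val.norm).inv₀
      (fun y => norm_ne_zero_of_sum y.1 y.2)).smul continuous_subtype_val
  continuous_invFun := by
    apply Continuous.subtype_mk
    have hcs : Continuous fun y : ↥(Metric.sphere (0 : EuclideanSpace ℝ (Fin N)) 1) =>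
        ∑ j, |y.1 j| := by
      apply continuous_finset_sum
      exact fun j _ => ((EuclideanSpace.proj j).continuous.comp continuous_subtype_val).abs
    exact (hcs.inv₀ fun y =>
      (sum_abs_pos_of_norm_one y.1 (mem_sphere_zero_iff_norm.mp y.2)).ne').smul
      continuous_subtype_val

end Radial

theorem card_eq {n : ℕ} [NeZero n] [NeZero (n/2)] (hn : n = 2 * (n/2)) :
    Fintype.card (ZMod n × ZMod (n/2)) = n^2/2 := by
  rw [Fintype.card_prod, ZMod.card, ZMod.card]
  obtain ⟨m, hm⟩ : ∃ m, n = 2 * m := ⟨n/2, hn⟩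
  subst hm
  have h2 : 2 * m / 2 = m := by omega
  rw [h2, pow_two]
  have h4 : 2 * m * (2 * m) = 2 * (2 * m * m) := by ring
  rw [h4, Nat.mul_div_cancel_left _ (by norm_num : 0 < 2)]


theorem stmt17 (n : ℕ) (hn : 2 ≤ n) (heven : Even n) :
    Nonempty
      (↥(Realization {σ : Finset (ZMod n × ZMod n) |
          IsVRSimplex (tdist n) ((n : ℤ) - 1) σ}) ≃ₜ
        ↥(Metric.sphere (0 : EuclideanSpace ℝ (Fin (n ^ 2 / 2))) 1)) := by
  obtain ⟨m, hm⟩ := heven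
  have hn2 : n = 2 * (n/2) := by omega
  have h1 : 1 ≤ n/2 := by omega
  haveI : NeZero n := ⟨by omega⟩
  haveI : NeZero (n/2) := ⟨by omega⟩
  have e : (ZMod n × ZMod (n/2)) ≃ Fin (n^2/2) := Fintype.equivFinOfCardEq (card_eq hn2)
  exact ⟨(homeo1 hn2 h1).trans ((homeo2 e).trans homeo3)⟩
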